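/- Let M be a diagonalizable mixing column-stochastic matrix, M = X^{-1} Λ X with Λ = diag(1, λ_2, …, λ_N). If κ(X) · max_k |ε_k| · n · max_k ‖m_k‖ < (1/2) · min_{2 ≤ j ≤ N} (1 − |λ_j|), then every eigenvalue μ ≠ 1 of the perturbed matrix M + ∑_k ε_k m_k satisfies |μ| < 1; in particular, 1 is a simple eigenvalue of the perturbed matrix. -/

import Mathlib

/-- ℓ¹ operator norm of a complex matrix: the maximal column absolute sum. -/
noncomputable def l1opNormC {N : ℕ} (A : Matrix (Fin (N+2)) (Fin (N+2)) ℂ) : ℝ :=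
  Finset.univ.sup' Finset.univ_nonempty fun j => ∑ i, ‖A i j‖

/-- ℓ¹ operator norm of a real matrix: the maximal column absolute sum. -/
noncomputable def l1opNormR {N : ℕ} (A : Matrix (Fin (N+2)) (Fin (N+2)) ℝ) : ℝ :=
  Finset.univ.sup' Finset.univ_nonempty fun j => ∑ i, |A i j|

lemma col_le_l1C {N : ℕ} (A : Matrix (Fin (N+2)) (Fin (N+2)) ℂ) (j) :
    ∑ i, ‖A i j‖ ≤ l1opNormC A :=
  Finset.le_sup' (fun j => ∑ i, ‖A i j‖) (Finset.mem_univ j)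

lemma l1C_nonneg {N : ℕ} (A : Matrix (Fin (N+2)) (Fin (N+2)) ℂ) : 0 ≤ l1opNormC A :=
  le_trans (Finset.sum_nonneg fun i _ => norm_nonneg _) (col_le_l1C A 0)

lemma mulVec_l1 {N : ℕ} (A : Matrix (Fin (N+2)) (Fin (N+2)) ℂ) (y : Fin (N+2) → ℂ) :
    ∑ i, ‖A.mulVec y i‖ ≤ l1opNormC A * ∑ j, ‖y j‖ := by
  calc ∑ i, ‖A.mulVec y i‖
      ≤ ∑ i, ∑ j, ‖A i j‖ * ‖y j‖ := by
        refine Finset.sum_le_sum fun i _ => ?_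
        refine le_trans (norm_sum_le Finset.univ (fun j => A i j * y j)) ?_
        exact Finset.sum_le_sum fun j _ => le_of_eq (norm_mul _ _)
    _ = ∑ j, (∑ i, ‖A i j‖) * ‖y j‖ := by
        rw [Finset.sum_comm]; simp [Finset.sum_mul]
    _ ≤ ∑ j, l1opNormC A * ‖y j‖ :=
        Finset.sum_le_sum fun j _ =>
          mul_le_mul_of_nonneg_right (col_le_l1C A j) (norm_nonneg _)
    _ = l1opNormC A * ∑ j, ‖y j‖ := by rw [Finset.mul_sum]

set_option maxHeartbeats 2000000 in
theorem perturbed_chain_spectral_stability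
    (N n : ℕ) (M : Matrix (Fin (N+2)) (Fin (N+2)) ℝ)
    (hnn : ∀ i j, 0 ≤ M i j) (hcol : ∀ j, ∑ i, M i j = 1)
    (hmix : ∃ p : ℕ, 0 < p ∧ ∀ i j, 0 < (M ^ p) i j)
    (X Λ : Matrix (Fin (N+2)) (Fin (N+2)) ℂ) (d : Fin (N+2) → ℂ)
    (hX : IsUnit X.det)
    (hΛ : Λ = Matrix.diagonal d) (hd0 : d 0 = 1)
    (hdec : M.map (Complex.ofReal) = X⁻¹ * Λ * X)
    (m : Fin (n+1) → Matrix (Fin (N+2)) (Fin (N+2)) ℝ)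
    (hmcol : ∀ k j, ∑ i, m k i j = 0)
    (ε : Fin (n+1) → ℝ)
    (hcond : l1opNormC X * l1opNormC X⁻¹ *
        (Finset.univ.sup' Finset.univ_nonempty fun k => |ε k|) * (n + 1) *
        (Finset.univ.sup' Finset.univ_nonempty fun k => l1opNormR (m k)) <
      (1/2) * ((Finset.univ.erase (0 : Fin (N+2))).inf'
        ⟨1, by simp⟩ fun j => 1 - ‖d j‖)) :
    (∀ μ : ℂ, μ ≠ 1 →
      (∃ v : Fin (N+2) → ℂ, v ≠ 0 ∧
        ((M + ∑ k, ε k • m k).map (Complex.ofReal)).mulVec v = μ • v) →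
      ‖μ‖ < 1) ∧
    Module.finrank ℂ
      (Module.End.eigenspace
        (Matrix.mulVecLin ((M + ∑ k, ε k • m k).map (Complex.ofReal))) 1) = 1 := by
  set E : Matrix (Fin (N+2)) (Fin (N+2)) ℝ := ∑ k, ε k • m k with hE
  set A : Matrix (Fin (N+2)) (Fin (N+2)) ℂ := (M + E).map Complex.ofReal with hAdef
  set Mc : Matrix (Fin (N+2)) (Fin (N+2)) ℂ := M.map Complex.ofReal with hMc
  set Ec : Matrix (Fin (N+2)) (Fin (N+2)) ℂ := E.map Complex.ofReal with hEc
  have hA : A = Mc + Ec := by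
    ext i j; simp [hAdef, hMc, hEc, Matrix.map_apply]
  set emax : ℝ := Finset.univ.sup' Finset.univ_nonempty fun k => |ε k| with hemax
  set mmax : ℝ := Finset.univ.sup' Finset.univ_nonempty fun k => l1opNormR (m k) with hmmax
  set δ : ℝ := l1opNormC X * l1opNormC X⁻¹ * emax * (n + 1) * mmax with hδ
  set g : ℝ := (Finset.univ.erase (0 : Fin (N+2))).inf'
        ⟨1, by simp⟩ fun j => 1 - ‖d j‖ with hg
  have hemax0 : 0 ≤ emax := le_trans (abs_nonneg (ε 0))
    (Finset.le_sup' (fun k => |ε k|) (Finset.mem_univ 0))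
  have hmR_nonneg : ∀ k, 0 ≤ l1opNormR (m k) := by
    intro k
    have h := Finset.le_sup' (f := fun j => ∑ i, |m k i j|) (b := (0 : Fin (N+2)))
      (Finset.mem_univ 0)
    exact le_trans (Finset.sum_nonneg fun i _ => abs_nonneg (m k i 0)) h
  have hmmax0 : 0 ≤ mmax := le_trans (hmR_nonneg 0)
    (Finset.le_sup' (fun k => l1opNormR (m k)) (Finset.mem_univ 0))
  have hδ0 : 0 ≤ δ := by
    have h1 := l1C_nonneg X; have h2 := l1C_nonneg X⁻¹
    have h3 : (0:ℝ) ≤ (n:ℝ) + 1 := by positivity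
    rw [hδ]
    exact mul_nonneg (mul_nonneg (mul_nonneg (mul_nonneg h1 h2) hemax0) h3) hmmax0
  have hgpos : 0 < g := by
    have : δ < (1/2) * g := hcond
    linarith
  have hδg : δ < (1/2) * g := hcond
  have hdj : ∀ j : Fin (N+2), j ≠ 0 → ‖d j‖ ≤ 1 - g := by
    intro j hj
    have h := Finset.inf'_le (fun j => 1 - ‖d j‖)
      (Finset.mem_erase.2 ⟨hj, Finset.mem_univ j⟩)
    have h2 : g ≤ 1 - ‖d j‖ := h
    linarith
  -- norm bound on Ec
  have hEc_l1 : l1opNormC Ec ≤ emax * (n + 1) * mmax := by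
    refine Finset.sup'_le _ _ fun j _ => ?_
    have hstep : ∑ i, ‖Ec i j‖ = ∑ i, |E i j| := by
      refine Finset.sum_congr rfl fun i _ => ?_
      rw [hEc]; simp [Matrix.map_apply, Complex.norm_real]
    rw [hstep]
    calc ∑ i, |E i j| ≤ ∑ i, ∑ k, |ε k| * |m k i j| := by
          refine Finset.sum_le_sum fun i _ => ?_
          rw [hE]
          simp only [Matrix.sum_apply, Matrix.smul_apply, smul_eq_mul]
          refine le_trans (Finset.abs_sum_le_sum_abs _ _) ?_
          exact Finset.sum_le_sum fun k _ => le_of_eq (abs_mul _ _)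
      _ = ∑ k, |ε k| * ∑ i, |m k i j| := by
          rw [Finset.sum_comm]
          exact Finset.sum_congr rfl fun k _ => (Finset.mul_sum _ _ _).symm
      _ ≤ ∑ k : Fin (n+1), emax * mmax := by
          refine Finset.sum_le_sum fun k _ => ?_
          have h1 : |ε k| ≤ emax := Finset.le_sup' (fun k => |ε k|) (Finset.mem_univ k)
          have h2 : ∑ i, |m k i j| ≤ l1opNormR (m k) :=
            Finset.le_sup' (fun j => ∑ i, |m k i j|) (Finset.mem_univ j)
          have h3 : l1opNormR (m k) ≤ mmax :=
            Finset.le_sup' (fun k => l1opNormR (m k)) (Finset.mem_univ k)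
          exact mul_le_mul h1 (h2.trans h3)
            (Finset.sum_nonneg fun i _ => abs_nonneg _) hemax0
      _ = (n + 1) * (emax * mmax) := by
          rw [Finset.sum_const, Finset.card_univ, Fintype.card_fin, nsmul_eq_mul]
          push_cast; ring
      _ = emax * (n + 1) * mmax := by ring
  -- X * Mc = Λ * X
  have hXM : X * Mc = Λ * X := by
    rw [hdec, ← Matrix.mul_assoc, ← Matrix.mul_assoc,
      Matrix.mul_nonsing_inv X hX, Matrix.one_mul]
  -- row 0 of X is a nonzero constant
  have hrow : ∃ c : ℂ, c ≠ 0 ∧ ∀ k, X 0 k = c := by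
    set u : Fin (N+2) → ℂ := fun _ => 1 with hu
    have huM : Matrix.vecMul u Mc = u := by
      funext j
      show ∑ i, u i * Mc i j = 1
      rw [hMc]
      simp only [hu, one_mul, Matrix.map_apply]
      rw [← Complex.ofReal_sum, hcol j, Complex.ofReal_one]
    set y := Matrix.vecMul u X⁻¹ with hy
    have hyX : Matrix.vecMul y X = u := by
      rw [hy, Matrix.vecMul_vecMul, Matrix.nonsing_inv_mul X hX, Matrix.vecMul_one]
    have hyΛ : Matrix.vecMul y Λ = y := by
      have h1 : Matrix.vecMul (Matrix.vecMul y Λ) X = Matrix.vecMul y X := by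
        rw [Matrix.vecMul_vecMul, ← hXM, ← Matrix.vecMul_vecMul, hyX, huM]
      have h2 : Matrix.vecMul (Matrix.vecMul (Matrix.vecMul y Λ) X) X⁻¹
          = Matrix.vecMul (Matrix.vecMul y X) X⁻¹ := by rw [h1]
      rwa [Matrix.vecMul_vecMul (Matrix.vecMul y Λ), Matrix.vecMul_vecMul y X,
        Matrix.mul_nonsing_inv X hX, Matrix.vecMul_one, Matrix.vecMul_one] at h2
    have hyj : ∀ j : Fin (N+2), j ≠ 0 → y j = 0 := by
      intro j hj
      have h := congrFun hyΛ j
      rw [hΛ, Matrix.vecMul_diagonal] at h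
      have hd1 : d j ≠ 1 := by
        intro he
        have h2 := hdj j hj
        rw [he] at h2
        simp only [norm_one] at h2
        linarith
      have h3 : y j * (d j - 1) = 0 := by rw [mul_sub, h, mul_one, sub_self]
      rcases mul_eq_zero.mp h3 with h4 | h4
      · exact h4
      · exact absurd (sub_eq_zero.mp h4) hd1
    have hy0 : ∀ k, y 0 * X 0 k = 1 := by
      intro k
      have h := congrFun hyX k
      show y 0 * X 0 k = 1
      rw [show Matrix.vecMul y X k = ∑ j, y j * X j k from rfl] at h
      rw [Finset.sum_eq_single 0 (fun j _ hj => by rw [hyj j hj, zero_mul])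
        (fun h => absurd (Finset.mem_univ 0) h)] at h
      exact h
    have hy0ne : y 0 ≠ 0 := by
      intro h
      have := hy0 0
      rw [h, zero_mul] at this
      exact zero_ne_one this
    refine ⟨(y 0)⁻¹, inv_ne_zero hy0ne, fun k => ?_⟩
    exact eq_inv_of_mul_eq_one_left (by rw [mul_comm]; exact hy0 k)
  -- the key Bauer–Fike style estimate
  have key : ∀ (μ : ℂ) (v : Fin (N+2) → ℂ), A.mulVec v = μ • v → v ≠ 0 →
      (∑ i, v i) = 0 → ∃ j : Fin (N+2), j ≠ 0 ∧ ‖μ - d j‖ ≤ δ := by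
    intro μ v hv hv0 hsum
    set w := X.mulVec v with hw
    have hwv : X⁻¹.mulVec w = v := by
      rw [hw, Matrix.mulVec_mulVec, Matrix.nonsing_inv_mul X hX, Matrix.one_mulVec]
    have hwne : w ≠ 0 := by
      intro h; apply hv0; rw [← hwv, h, Matrix.mulVec_zero]
    have hw00 : w 0 = 0 := by
      obtain ⟨c, hc, hrc⟩ := hrow
      have h0 : w 0 = ∑ k, X 0 k * v k := rfl
      rw [h0]
      calc ∑ k, X 0 k * v k = ∑ k, c * v k :=
            Finset.sum_congr rfl fun k _ => by rw [hrc k]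
        _ = c * ∑ k, v k := (Finset.mul_sum _ _ _).symm
        _ = 0 := by rw [hsum, mul_zero]
    set u := X.mulVec (Ec.mulVec v) with hu
    have hcomp : ∀ j, (μ - d j) * w j = u j := by
      have h1 : μ • w = Λ.mulVec w + u := by
        have e1 : X.mulVec (A.mulVec v) = μ • w := by
          rw [hv, Matrix.mulVec_smul, hw]
        have e2 : X.mulVec (A.mulVec v) = Λ.mulVec w + u := by
          rw [hA, Matrix.add_mulVec, Matrix.mulVec_add, hu]
          congr 1
          rw [Matrix.mulVec_mulVec, hXM, ← Matrix.mulVec_mulVec, hw]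
        rw [← e1, e2]
      intro j
      have h2 := congrFun h1 j
      have h3 : (Λ.mulVec w) j = d j * w j := by rw [hΛ, Matrix.mulVec_diagonal]
      have h4 : μ * w j = d j * w j + u j := by
        rw [← h3]; exact h2
      linear_combination h4
    have hsum1 : ∑ j, ‖μ - d j‖ * ‖w j‖
        ≤ δ * ∑ j, ‖w j‖ := by
      have e1 : ∑ j, ‖μ - d j‖ * ‖w j‖
          = ∑ j, ‖u j‖ :=
        Finset.sum_congr rfl fun j _ => by rw [← norm_mul, hcomp j]
      have hS : 0 ≤ ∑ j, ‖w j‖ :=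
        Finset.sum_nonneg fun j _ => norm_nonneg _
      have hX1 := l1C_nonneg X
      have hX2 := l1C_nonneg X⁻¹
      have hEn := l1C_nonneg Ec
      have b3 : ∑ j, ‖v j‖ ≤ l1opNormC X⁻¹ * ∑ j, ‖w j‖ := by
        have h := mulVec_l1 X⁻¹ w
        rw [hwv] at h; exact h
      have b2 : ∑ j, ‖(Ec.mulVec v) j‖
          ≤ l1opNormC Ec * (l1opNormC X⁻¹ * ∑ j, ‖w j‖) := by
        refine (mulVec_l1 Ec v).trans ?_
        exact mul_le_mul_of_nonneg_left b3 hEn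
      have b1 : ∑ j, ‖u j‖
          ≤ l1opNormC X * (l1opNormC Ec * (l1opNormC X⁻¹ * ∑ j, ‖w j‖)) := by
        rw [hu]
        refine (mulVec_l1 X _).trans ?_
        exact mul_le_mul_of_nonneg_left b2 hX1
      rw [e1]
      refine b1.trans ?_
      have c2 : (l1opNormC X * l1opNormC X⁻¹) * l1opNormC Ec
          ≤ (l1opNormC X * l1opNormC X⁻¹) * (emax * (n + 1) * mmax) :=
        mul_le_mul_of_nonneg_left hEc_l1 (mul_nonneg hX1 hX2)
      have c3 : (l1opNormC X * l1opNormC X⁻¹) * (emax * (↑n + 1) * mmax) = δ := by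
        rw [hδ]; ring
      calc l1opNormC X * (l1opNormC Ec * (l1opNormC X⁻¹ * ∑ j, ‖w j‖))
          = ((l1opNormC X * l1opNormC X⁻¹) * l1opNormC Ec) * ∑ j, ‖w j‖ := by
            ring
        _ ≤ ((l1opNormC X * l1opNormC X⁻¹) * (emax * (↑n + 1) * mmax))
              * ∑ j, ‖w j‖ := mul_le_mul_of_nonneg_right c2 hS
        _ = δ * ∑ j, ‖w j‖ := by rw [c3]
    by_contra hcon
    push_neg at hcon
    have hlt : ∑ j, δ * ‖w j‖
        < ∑ j, ‖μ - d j‖ * ‖w j‖ := by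
      obtain ⟨j0, hj0⟩ := Function.ne_iff.mp hwne
      have hj0ne : j0 ≠ 0 := by
        intro h; apply hj0; rw [h]; exact hw00
      refine Finset.sum_lt_sum (fun j _ => ?_) ⟨j0, Finset.mem_univ j0, ?_⟩
      · by_cases hwj : w j = 0
        · simp [hwj]
        · have hj : j ≠ 0 := by
            intro h; apply hwj; rw [h]; exact hw00
          exact mul_le_mul_of_nonneg_right (le_of_lt (hcon j hj)) (norm_nonneg _)
      · exact mul_lt_mul_of_pos_right (hcon j0 hj0ne) (norm_pos_iff.mpr hj0)
    rw [← Finset.mul_sum] at hlt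
    linarith
  -- column sums of A are 1
  have hAcol : ∀ j, ∑ i, A i j = 1 := by
    intro j
    have hEcol : ∑ i, E i j = 0 := by
      rw [hE]; simp only [Finset.sum_apply, Matrix.sum_apply, Matrix.smul_apply,
        smul_eq_mul]
      rw [Finset.sum_comm]
      refine Finset.sum_eq_zero fun k _ => ?_
      rw [← Finset.mul_sum, hmcol k j, mul_zero]
    have : ∑ i, ((M + E) i j : ℝ) = 1 := by
      simp only [Matrix.add_apply, Finset.sum_add_distrib, hcol j, hEcol, add_zero]
    rw [hAdef]
    simp only [Matrix.map_apply]
    rw [← Complex.ofReal_sum, this, Complex.ofReal_one]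
  constructor
  · rintro μ hμ ⟨v, hv0, hv⟩
    have hsum : (∑ i, v i) = 0 := by
      have h1 : ∑ i, (A.mulVec v) i = ∑ i, v i := by
        simp only [Matrix.mulVec, dotProduct]
        rw [Finset.sum_comm]
        refine Finset.sum_congr rfl fun j _ => ?_
        rw [← Finset.sum_mul, hAcol j, one_mul]
      rw [hv] at h1
      simp only [Pi.smul_apply, smul_eq_mul, ← Finset.mul_sum] at h1
      have h2 : (μ - 1) * (∑ i, v i) = 0 := by rw [sub_mul]; rw [h1]; ring
      rcases mul_eq_zero.mp h2 with h | h
      · exact absurd (sub_eq_zero.mp h) hμ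
      · exact h
    obtain ⟨j, hj, hjle⟩ := key μ v hv hv0 hsum
    have h1 : ‖μ‖ - ‖d j‖ ≤ ‖μ - d j‖ :=
      norm_sub_norm_le μ (d j)
    have h2 := hdj j hj
    linarith
  · -- the eigenspace of 1 is one-dimensional
    set S := Module.End.eigenspace (Matrix.mulVecLin A) 1 with hSdef
    have hmem : ∀ v : Fin (N+2) → ℂ, v ∈ S ↔ A.mulVec v = v := by
      intro v
      rw [hSdef, Module.End.mem_eigenspace_iff, one_smul, Matrix.mulVecLin_apply]
    -- existence of an eigenvector for eigenvalue 1
    have hdet : (A - 1).det = 0 := by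
      rw [← Matrix.det_transpose, ← Matrix.exists_mulVec_eq_zero_iff]
      refine ⟨fun _ => 1, fun h => one_ne_zero (congrFun h 0), ?_⟩
      funext j
      have hLHS : (((A - 1).transpose).mulVec (fun _ => (1:ℂ))) j = ∑ i, (A - 1) i j := by
        simp [Matrix.mulVec, dotProduct, Matrix.transpose_apply]
      rw [hLHS]
      simp only [Matrix.sub_apply]
      rw [Finset.sum_sub_distrib, hAcol j]
      simp [Matrix.one_apply]
    obtain ⟨v, hvne, hveq⟩ := Matrix.exists_mulVec_eq_zero_iff.mpr hdet
    have hvA : A.mulVec v = v := by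
      rw [Matrix.sub_mulVec, Matrix.one_mulVec, sub_eq_zero] at hveq
      exact hveq
    have hnt : Nontrivial S := by
      refine ⟨⟨⟨v, (hmem v).2 hvA⟩, 0, ?_⟩⟩
      intro h
      exact hvne (by simpa using congrArg Subtype.val h)
    have hpos : 0 < Module.finrank ℂ S := Module.finrank_pos
    -- upper bound via the sum functional
    let f : (Fin (N+2) → ℂ) →ₗ[ℂ] ℂ := ∑ i, LinearMap.proj i
    have hf : ∀ z : Fin (N+2) → ℂ, f z = ∑ i, z i := by
      intro z
      simp [f, LinearMap.proj_apply]
    have hinj : Function.Injective (f.comp S.subtype) := by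
      rw [← LinearMap.ker_eq_bot]
      rw [Submodule.eq_bot_iff]
      intro x hx
      have hx0 : (∑ i, (x : Fin (N+2) → ℂ) i) = 0 := by
        have := hx
        rw [LinearMap.mem_ker, LinearMap.comp_apply, Submodule.subtype_apply, hf] at this
        exact this
      by_contra hne
      have hvne2 : (x : Fin (N+2) → ℂ) ≠ 0 := by
        intro h; exact hne (Subtype.ext h)
      have hx1 : A.mulVec (x : Fin (N+2) → ℂ) = (1 : ℂ) • (x : Fin (N+2) → ℂ) := by
        rw [one_smul]; exact (hmem _).1 x.2
      obtain ⟨j, hj, hle⟩ := key 1 (x : Fin (N+2) → ℂ) hx1 hvne2 hx0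
      have h1 : 1 - ‖d j‖ ≤ ‖1 - d j‖ := by
        have h := norm_sub_norm_le (1:ℂ) (d j)
        rwa [norm_one] at h
      have h2 := hdj j hj
      linarith
    have hle1 : Module.finrank ℂ S ≤ 1 := by
      have h := LinearMap.finrank_le_finrank_of_injective hinj
      rwa [Module.finrank_self] at h
    omega
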